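/- Let C_sig be a symmetric n×n real matrix, σ² ∈ ℝ, and M an n×n real orthogonal matrix. Set A_s := Mᵀ C_sig M, O := off(A_s), and let G_E := 2·(C_sig + σ² I)·M·O be the Euclidean gradient of f at M for the observation C_sig + σ² I. Then with H := Mᵀ G_E: (i) the skew part satisfies (H − Hᵀ)/2 = [A_s, O] = −Ω(M), which is independent of σ²; and (ii) the symmetric part satisfies (H + Hᵀ)/2 = A_s O + O A_s + 2σ² O, whose σ²-dependent contribution 2σ²O lies entirely in the normal direction and scales linearly with σ². -/
import Mathlib


open Matrix

/-- The diagonal matrix whose diagonal agrees with `X`. -/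
noncomputable def diagPart {n : ℕ} (X : Matrix (Fin n) (Fin n) ℝ) :
    Matrix (Fin n) (Fin n) ℝ :=
  Matrix.diagonal (fun i => X i i)

/-- **Euclidean gradient decomposition**: writing `A_s = Mᵀ C_sig M`, `O = off(A_s)`,
`G_E = 2(C_sig + σ²I) M O`, and `H = Mᵀ G_E`, the skew part of `H` equals
`[A_s, O] = −Ω(M)` (σ²-free), while the symmetric part equals
`A_s O + O A_s + 2σ² O`, whose σ²-dependent contribution `2σ²O` is normal and scales
linearly with `σ²`. -/
theorem euclidean_gradient_decomposition {n : ℕ}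
    (Csig M : Matrix (Fin n) (Fin n) ℝ) (hCsig : Csigᵀ = Csig) (hM : Mᵀ * M = 1)
    (σsq : ℝ) :
    -- abbreviations, fixed by hypotheses:
    ∀ As O GE H : Matrix (Fin n) (Fin n) ℝ,
      As = Mᵀ * Csig * M →
      O = As - diagPart As →
      GE = (2 : ℝ) • ((Csig + σsq • (1 : Matrix (Fin n) (Fin n) ℝ)) * M * O) →
      H = Mᵀ * GE →
      ((1 / 2 : ℝ) • (H - Hᵀ) = As * O - O * As ∧
       As * O - O * As = -(As * diagPart As - diagPart As * As) ∧
       (1 / 2 : ℝ) • (H + Hᵀ) = As * O + O * As + (2 * σsq) • O) := by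
  intro As O GE H hAs hO hGE hH
  have hAsT : Asᵀ = As := by
    rw [hAs]; simp [Matrix.transpose_mul, hCsig, Matrix.mul_assoc]
  have hDT : (diagPart As)ᵀ = diagPart As := by
    simp [diagPart, Matrix.diagonal_transpose]
  have hOT : Oᵀ = O := by
    rw [hO, Matrix.transpose_sub, hAsT, hDT]
  -- H = 2 As O + 2 σ² O
  have hH' : H = (2:ℝ) • (As * O) + (2 * σsq) • O := by
    rw [hH, hGE, hAs]
    rw [Matrix.mul_smul]
    rw [show (Csig + σsq • (1 : Matrix (Fin n) (Fin n) ℝ)) * M * O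
        = Csig * M * O + σsq • (M * O) by
      rw [Matrix.add_mul, Matrix.add_mul, Matrix.smul_mul, Matrix.smul_mul,
        Matrix.one_mul]]
    rw [Matrix.mul_add, Matrix.mul_smul]
    rw [show Mᵀ * (Csig * M * O) = Mᵀ * Csig * M * O by
      simp [Matrix.mul_assoc]]
    rw [show Mᵀ * (M * O) = O by rw [← Matrix.mul_assoc, hM, Matrix.one_mul]]
    rw [smul_add, smul_smul]

  have hHT : Hᵀ = (2:ℝ) • (O * As) + (2 * σsq) • O := by
    rw [hH']
    simp [Matrix.transpose_add, Matrix.transpose_smul, Matrix.transpose_mul,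
      hAsT, hOT]
  refine ⟨?_, ?_, ?_⟩
  · rw [hHT, hH']
    have : ((2:ℝ) • (As * O) + (2 * σsq) • O) - ((2:ℝ) • (O * As) + (2 * σsq) • O)
        = (2:ℝ) • (As * O - O * As) := by
      rw [smul_sub]; abel
    rw [this, smul_smul]
    norm_num
  · rw [hO]
    rw [Matrix.mul_sub, Matrix.sub_mul]
    abel
  · rw [hHT, hH']
    have : ((2:ℝ) • (As * O) + (2 * σsq) • O) + ((2:ℝ) • (O * As) + (2 * σsq) • O)
        = (2:ℝ) • (As * O + O * As + (2 * σsq) • O) := by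
      module
    rw [this, smul_smul]
    norm_num
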